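/- Let S_P = (S, s_I, G, Succ) be an unlabeled state model, let ∼ be a faithful equivalence relation on S, and let π ⊆ S × S be a policy that is uniform over ∼. Then π solves S_P (i.e., every maximal π-trajectory seeded at s_I is finite and ends in a goal state) if and only if the lifted policy π̃ = {([s],[s']) : (s,s') ∈ π} solves the abstraction of S_P induced by ∼ (i.e., every maximal π̃-trajectory seeded at [s_I] is finite and ends in a goal class). -/
import Mathlib


/-- A relation `r` is faithful for the model `(S, s_I, G, Succ)`. -/
def Faithful {S : Type*} (Succ : S → S → Prop) (G : Set S) (r : S → S → Prop) : Prop :=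
  (∀ s s' t, Succ s s' → r t s → ∃ t', Succ t t' ∧ r t' s') ∧
  (∀ s t, r s t → (s ∈ G ↔ t ∈ G))

/-- A policy `π` is uniform over the equivalence `r` iff whenever `s ∼ t` and
`s' ∼ t'`, `(s,s') ∈ π` iff `(t,t') ∈ π`. -/
def Uniform {S : Type*} (r : S → S → Prop) (π : S → S → Prop) : Prop :=
  ∀ s t s' t', r s t → r s' t' → (π s s' ↔ π t t')

/-- A policy (given via the combined step relation `step = Succ ∩ π`) solves the
model with goals `G` from state `s0` iff every maximal `π`-trajectory seeded at
`s0` is finite and ends in a goal state: there is no infinite `π`-trajectory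
seeded at `s0`, and every non-extendable finite `π`-trajectory seeded at `s0`
ends in a goal state. -/
def Solves {S : Type*} (step : S → S → Prop) (G : Set S) (s0 : S) : Prop :=
  (¬ ∃ τ : ℕ → S, τ 0 = s0 ∧ ∀ i, step (τ i) (τ (i + 1))) ∧
  (∀ (n : ℕ) (τ : ℕ → S), τ 0 = s0 → (∀ i < n, step (τ i) (τ (i + 1))) →
    (∀ s', ¬ step (τ n) s') → τ n ∈ G)

/-- The successor relation of the abstraction induced by a `Setoid`. -/
def AbsSucc {S : Type*} (st : Setoid S) (Succ : S → S → Prop) :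
    Quotient st → Quotient st → Prop :=
  fun q q' => ∃ t t', Quotient.mk st t = q ∧ Quotient.mk st t' = q' ∧ Succ t t'

/-- The lifted policy `π̃ = {([s],[s']) : (s,s') ∈ π}`. -/
def AbsPolicy {S : Type*} (st : Setoid S) (π : S → S → Prop) :
    Quotient st → Quotient st → Prop :=
  fun q q' => ∃ s s', Quotient.mk st s = q ∧ Quotient.mk st s' = q' ∧ π s s'

/-- The goal classes `G̃ = {[s] : s ∈ G}` of the abstraction. -/
def AbsGoal {S : Type*} (st : Setoid S) (G : Set S) : Set (Quotient st) :=
  {q | ∃ s ∈ G, Quotient.mk st s = q}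

/-- For a faithful equivalence `∼` and a policy `π` uniform over `∼`,
`π` solves the model `(S, s_I, G, Succ)` iff the lifted policy `π̃` solves the
abstraction induced by `∼`. -/
theorem solves_iff_solves_abstraction {S : Type*} (st : Setoid S)
    (sI : S) (G : Set S) (Succ : S → S → Prop) (π : S → S → Prop)
    (hfaithful : Faithful Succ G (fun s t => st.r s t))
    (huniform : Uniform (fun s t => st.r s t) π) :
    Solves (fun s s' => Succ s s' ∧ π s s') G sI ↔
      Solves (fun q q' => AbsSucc st Succ q q' ∧ AbsPolicy st π q q')
        (AbsGoal st G) (Quotient.mk st sI) := by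
  have key : ∀ (s : S) (q' : Quotient st),
      (AbsSucc st Succ (Quotient.mk st s) q' ∧ AbsPolicy st π (Quotient.mk st s) q') ↔
      ∃ s', (Succ s s' ∧ π s s') ∧ Quotient.mk st s' = q' := by
    intro s q'
    constructor
    · rintro ⟨⟨t, t', ht, ht', hsucc⟩, ⟨u, u', hu, hu', hpi⟩⟩
      have hts : st.r t s := Quotient.exact ht
      have hut : st.r u t := Quotient.exact (hu.trans ht.symm)
      have hu't' : st.r u' t' := Quotient.exact (hu'.trans ht'.symm)
      have hpt : π t t' := (huniform u t u' t' hut hu't').mp hpi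
      obtain ⟨s₂, hsucc2, hr⟩ := hfaithful.1 t t' s hsucc (st.iseqv.symm hts)
      refine ⟨s₂, ⟨hsucc2, (huniform t s t' s₂ hts (st.iseqv.symm hr)).mp hpt⟩, ?_⟩
      exact (Quotient.sound hr).trans ht'
    · rintro ⟨s', ⟨hsucc, hpi⟩, hmk⟩
      exact ⟨⟨s, s', rfl, hmk, hsucc⟩, ⟨s, s', rfl, hmk, hpi⟩⟩
  have gkey : ∀ s : S, Quotient.mk st s ∈ AbsGoal st G ↔ s ∈ G := by
    intro s
    constructor
    · rintro ⟨g, hg, heq⟩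
      exact (hfaithful.2 g s (Quotient.exact heq)).mp hg
    · intro hs; exact ⟨s, hs, rfl⟩
  constructor
  · rintro ⟨hfin, hgoal⟩
    constructor
    · rintro ⟨σ, hσ0, hσs⟩
      have en : ∀ (n : ℕ) (s : S), Quotient.mk st s = σ n →
          ∃ s', (Succ s s' ∧ π s s') ∧ Quotient.mk st s' = σ (n+1) := by
        intro n s hs
        exact (key s (σ (n+1))).mp (by rw [hs]; exact hσs n)
      let f : ∀ n, {s : S // Quotient.mk st s = σ n} := fun n =>
        Nat.rec ⟨sI, hσ0.symm⟩
          (fun k ih => ⟨Classical.choose (en k ih.1 ih.2),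
            (Classical.choose_spec (en k ih.1 ih.2)).2⟩) n
      apply hfin
      exact ⟨fun n => (f n).1, rfl,
        fun i => (Classical.choose_spec (en i (f i).1 (f i).2)).1⟩
    · intro n σ hσ0 hσs hσmax
      have build : ∀ k, k ≤ n → ∃ τ : ℕ → S, τ 0 = sI ∧
          (∀ i < k, Succ (τ i) (τ (i+1)) ∧ π (τ i) (τ (i+1))) ∧
          Quotient.mk st (τ k) = σ k := by
        intro k
        induction k with
        | zero => exact fun _ => ⟨fun _ => sI, rfl,
            fun i hi => (Nat.not_lt_zero i hi).elim, hσ0.symm⟩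
        | succ k ih =>
          intro hk
          obtain ⟨τ, h0, hs, hmk⟩ := ih (Nat.le_of_succ_le hk)
          obtain ⟨s', hstep, hmk'⟩ := (key (τ k) (σ (k+1))).mp
            (by rw [hmk]; exact hσs k hk)
          refine ⟨fun i => if i ≤ k then τ i else s', by simp [h0], ?_, by simp [hmk']⟩
          intro i hi
          rcases Nat.lt_succ_iff_lt_or_eq.mp hi with h | h
          · simpa [Nat.le_of_lt h, Nat.succ_le_of_lt h] using hs i h
          · subst h
            simpa using hstep
      obtain ⟨τ, h0, hs, hmk⟩ := build n le_rfl
      have hnomax : ∀ s', ¬ (Succ (τ n) s' ∧ π (τ n) s') := by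
        intro s' hstep
        exact hσmax (Quotient.mk st s')
          ⟨⟨τ n, s', hmk, rfl, hstep.1⟩, ⟨τ n, s', hmk, rfl, hstep.2⟩⟩
      have := hgoal n τ h0 hs hnomax
      exact hmk ▸ (gkey (τ n)).mpr this
  · rintro ⟨hfin, hgoal⟩
    constructor
    · rintro ⟨τ, h0, hs⟩
      apply hfin
      refine ⟨fun n => Quotient.mk st (τ n), congrArg (Quotient.mk st) h0, fun i => ?_⟩
      exact ⟨⟨τ i, τ (i+1), rfl, rfl, (hs i).1⟩, ⟨τ i, τ (i+1), rfl, rfl, (hs i).2⟩⟩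
    · intro n τ h0 hs hmax
      have hσmax : ∀ q', ¬ (AbsSucc st Succ (Quotient.mk st (τ n)) q' ∧
          AbsPolicy st π (Quotient.mk st (τ n)) q') := by
        intro q' habs
        obtain ⟨s', hstep, _⟩ := (key (τ n) q').mp habs
        exact hmax s' hstep
      have := hgoal n (fun i => Quotient.mk st (τ i)) (congrArg (Quotient.mk st) h0)
        (fun i hi => ⟨⟨τ i, τ (i+1), rfl, rfl, (hs i hi).1⟩,
          ⟨τ i, τ (i+1), rfl, rfl, (hs i hi).2⟩⟩) hσmax
      exact (gkey (τ n)).mp this
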